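/- arXiv:2106.09387 — 5 statements merged into one kernel-verified Lean document; each statement's English description precedes it below -/
import Mathlib

section
/- Let β ∈ ℝ^p and let 𝓑 = {β' ∈ ℝ^p : β' ≥ 0 componentwise, ‖β'‖₁ ≤ b} for some b > 0. Then the Euclidean (ℓ₂) projection β̃ of β onto 𝓑 satisfies β̃ᵢ = max(βᵢ - γ, 0) for all i, where γ = inf{γ ≥ 0 : Σᵢ max(βᵢ - γ, 0) ≤ b}. -/
/-- The Euclidean projection of `β` onto the intersection of the nonnegative orthant with the
`ℓ¹`-ball of radius `b` is given coordinatewise by soft-thresholding: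
`β̃ᵢ = max (βᵢ - γ) 0` where `γ = inf {g ≥ 0 : Σᵢ max (βᵢ - g) 0 ≤ b}`. -/
theorem stmt_1 {p : ℕ} (b : ℝ) (hb : 0 < b) (β : EuclideanSpace ℝ (Fin p))
    (B : Set (EuclideanSpace ℝ (Fin p)))
    (hB : B = {β' : EuclideanSpace ℝ (Fin p) | (∀ i, 0 ≤ β' i) ∧ ∑ i, |β' i| ≤ b})
    (γ : ℝ)
    (hγ : γ = sInf {g : ℝ | 0 ≤ g ∧ ∑ i, max (β i - g) 0 ≤ b})
    (βt : EuclideanSpace ℝ (Fin p))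
    (hmem : βt ∈ B)
    (hproj : ∀ y ∈ B, ‖β - βt‖ ≤ ‖β - y‖) :
    ∀ i, βt i = max (β i - γ) 0 := by
  classical
  set S : ℝ → ℝ := fun g => ∑ i, max (β i - g) 0 with hS
  set A : Set ℝ := {g : ℝ | 0 ≤ g ∧ S g ≤ b} with hA
  have hScont : Continuous S := by
    apply continuous_finset_sum
    intro i _
    exact (continuous_const.sub continuous_id).max continuous_const
  have hAclosed : IsClosed A := by
    have : A = {g : ℝ | 0 ≤ g} ∩ {g : ℝ | S g ≤ b} := by
      ext g; simp [hA, Set.mem_setOf_eq]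
    rw [this]
    exact (isClosed_le continuous_const continuous_id).inter
      (isClosed_le hScont continuous_const)
  have hAne : A.Nonempty := by
    refine ⟨∑ i, max (β i) 0, ?_, ?_⟩
    · exact Finset.sum_nonneg fun i _ => le_max_right _ _
    · have : S (∑ i, max (β i) 0) = 0 := by
        apply Finset.sum_eq_zero
        intro i _
        have h1 : β i ≤ ∑ j, max (β j) 0 := by
          calc β i ≤ max (β i) 0 := le_max_left _ _
            _ ≤ ∑ j, max (β j) 0 :=
              Finset.single_le_sum (f := fun j => max (β j) 0) (fun j _ => le_max_right _ _) (Finset.mem_univ i)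
        exact max_eq_right (by linarith)
      rw [this]; exact hb.le
  have hAbdd : BddBelow A := ⟨0, fun g hg => hg.1⟩
  have hγmem : γ ∈ A := hγ ▸ hAclosed.csInf_mem hAne hAbdd
  have hγ0 : 0 ≤ γ := hγmem.1
  have hSγ : S γ ≤ b := hγmem.2
  -- If γ > 0 then S γ = b
  have hcrit : 0 < γ → S γ = b := by
    intro hγpos
    by_contra hne
    have hlt : S γ < b := lt_of_le_of_ne hSγ hne
    have hopen : IsOpen {g : ℝ | S g < b} := isOpen_lt hScont continuous_const
    obtain ⟨δ, hδpos, hδ⟩ := Metric.isOpen_iff.1 hopen γ hlt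
    set g := max (γ - δ/2) 0 with hg
    have hg0 : 0 ≤ g := le_max_right _ _
    have hgltγ : g < γ := max_lt (by linarith) hγpos
    have hgball : g ∈ Metric.ball γ δ := by
      rw [Metric.mem_ball, Real.dist_eq, abs_sub_lt_iff]
      constructor
      · linarith
      · have : γ - δ/2 ≤ g := le_max_left _ _
        linarith
    have hgA : g ∈ A := ⟨hg0, (hδ hgball).le⟩
    have : γ ≤ g := hγ ▸ csInf_le hAbdd hgA
    linarith
  -- the candidate point
  set x : EuclideanSpace ℝ (Fin p) := WithLp.toLp 2 (fun i => max (β i - γ) 0) with hx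
  have hxB : x ∈ B := by
    rw [hB]
    refine ⟨fun i => le_max_right _ _, ?_⟩
    have : ∑ i, |x i| = S γ := by
      apply Finset.sum_congr rfl
      intro i _
      exact abs_of_nonneg (le_max_right _ _)
    rw [this]; exact hSγ
  have hsumx : ∑ i, x i = S γ := rfl
  -- variational inequality
  have key : ∀ y ∈ B, (inner ℝ (β - x) (y - x) : ℝ) ≤ 0 := by
    intro y hy
    rw [hB] at hy
    obtain ⟨hy0, hy1⟩ := hy
    have hsumy : ∑ i, y i ≤ b := by
      have : ∑ i, y i = ∑ i, |y i| :=
        Finset.sum_congr rfl fun i _ => (abs_of_nonneg (hy0 i)).symm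
      linarith [hy1, this]
    have hinner : (inner ℝ (β - x) (y - x) : ℝ) = ∑ i, (β i - x i) * (y i - x i) := by
      rw [PiLp.inner_apply]
      apply Finset.sum_congr rfl
      intro i _
      simp [RCLike.inner_apply, mul_comm]
    have termle : ∀ i, (β i - x i) * (y i - x i) ≤ γ * (y i - x i) := by
      intro i
      have hxi : x i = max (β i - γ) 0 := rfl
      rcases le_or_gt γ (β i) with h | h
      · have hxi' : x i = β i - γ := by rw [hxi, max_eq_left (by linarith)]
        have : β i - x i = γ := by rw [hxi']; ring
        rw [this]
      · have hxi' : x i = 0 := by rw [hxi, max_eq_right (by linarith)]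
        rw [hxi', sub_zero, sub_zero]
        exact mul_le_mul_of_nonneg_right h.le (hy0 i)
    calc (inner ℝ (β - x) (y - x) : ℝ) = ∑ i, (β i - x i) * (y i - x i) := hinner
      _ ≤ ∑ i, γ * (y i - x i) := Finset.sum_le_sum fun i _ => termle i
      _ = γ * ((∑ i, y i) - S γ) := by
          rw [← Finset.mul_sum, Finset.sum_sub_distrib, hsumx]
      _ ≤ 0 := by
          rcases eq_or_lt_of_le hγ0 with h | h
          · rw [← h]; ring_nf; rfl
          · have hb' : S γ = b := hcrit h
            nlinarith
  -- conclude βt = x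
  have h1 : ‖β - βt‖ ≤ ‖β - x‖ := hproj x hxB
  have h2 : (inner ℝ (β - x) (βt - x) : ℝ) ≤ 0 := key βt hmem
  have hsplit : β - βt = (β - x) - (βt - x) := by abel
  have hexp : ‖β - βt‖ ^ 2 = ‖β - x‖ ^ 2 - 2 * (inner ℝ (β - x) (βt - x) : ℝ) + ‖βt - x‖ ^ 2 := by
    rw [hsplit]
    exact norm_sub_sq_real _ _
  have hle : ‖β - βt‖ ^ 2 ≤ ‖β - x‖ ^ 2 := by
    apply pow_le_pow_left₀ (norm_nonneg _) h1
  have hzero : ‖βt - x‖ ^ 2 ≤ 0 := by nlinarith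
  have : βt - x = 0 := by
    have := le_antisymm hzero (sq_nonneg _)
    have hn : ‖βt - x‖ = 0 := by
      nlinarith [norm_nonneg (βt - x)]
    exact norm_eq_zero.1 hn
  have hbx : βt = x := sub_eq_zero.1 this
  intro i
  rw [hbx]
end

section
/- Let H be a Hilbert space and let Σ, Σ̄ be bounded self-adjoint nonnegative operators on H; let λ > 0. Then ‖I − (Σ + λI)^{1/2} (Σ̄ + λI)⁻¹ (Σ + λI)^{1/2}‖_op ≤ (1/λ) ‖Σ̄ − Σ‖_op. -/
open scoped RealInnerProductSpace

set_option maxHeartbeats 2000000 in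
/-- Let `S, S̄` be bounded self-adjoint nonnegative operators on a real Hilbert space and
`λ > 0`. If `R` is the self-adjoint nonnegative square root of `S + λI` and `B` the inverse
of `S̄ + λI`, then `‖I − R B R‖ ≤ (1/λ)‖S̄ − S‖`. -/
theorem stmt_10 {H : Type*} [NormedAddCommGroup H] [InnerProductSpace ℝ H] [CompleteSpace H]
    (S Sb : H →L[ℝ] H) (hS : IsSelfAdjoint S) (hSb : IsSelfAdjoint Sb)
    (hSpos : ∀ f : H, 0 ≤ ⟪S f, f⟫) (hSbpos : ∀ f : H, 0 ≤ ⟪Sb f, f⟫)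
    (lam : ℝ) (hlam : 0 < lam)
    (R : H →L[ℝ] H) (hR : IsSelfAdjoint R) (hRpos : ∀ f : H, 0 ≤ ⟪R f, f⟫)
    (hRsq : R ∘L R = S + lam • ContinuousLinearMap.id ℝ H)
    (B : H →L[ℝ] H)
    (hB₁ : B ∘L (Sb + lam • ContinuousLinearMap.id ℝ H) = ContinuousLinearMap.id ℝ H)
    (hB₂ : (Sb + lam • ContinuousLinearMap.id ℝ H) ∘L B = ContinuousLinearMap.id ℝ H) :
    ‖ContinuousLinearMap.id ℝ H - R ∘L B ∘L R‖ ≤ (1 / lam) * ‖Sb - S‖ := by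
  set c : ℝ := (1 / lam) * ‖Sb - S‖ with hc
  have hc0 : 0 ≤ c := by positivity
  have hclam : c * lam = ‖Sb - S‖ := by
    rw [hc]; field_simp [hlam.ne']
  -- symmetry facts
  have hRsym : ∀ x y : H, ⟪R x, y⟫ = ⟪x, R y⟫ := fun x y =>
    (ContinuousLinearMap.isSelfAdjoint_iff_isSymmetric.mp hR) x y
  have hSsym : ∀ x y : H, ⟪S x, y⟫ = ⟪x, S y⟫ := fun x y =>
    (ContinuousLinearMap.isSelfAdjoint_iff_isSymmetric.mp hS) x y
  have hSbsym : ∀ x y : H, ⟪Sb x, y⟫ = ⟪x, Sb y⟫ := fun x y =>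
    (ContinuousLinearMap.isSelfAdjoint_iff_isSymmetric.mp hSb) x y
  -- pointwise identities
  have hRR : ∀ x : H, R (R x) = S x + lam • x := by
    intro x
    have := congrFun (congrArg DFunLike.coe hRsq) x
    simpa using this
  have hYB : ∀ x : H, Sb (B x) + lam • B x = x := by
    intro x
    have := congrFun (congrArg DFunLike.coe hB₂) x
    simpa using this
  -- ⟪R (R x), x⟫ = ‖R x‖²
  have hXX : ∀ x : H, ⟪S x, x⟫ + lam * ‖x‖ ^ 2 = ‖R x‖ ^ 2 := by
    intro x
    have h1 : ⟪R (R x), x⟫ = ‖R x‖ ^ 2 := by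
      rw [hRsym (R x) x, real_inner_self_eq_norm_sq]
    rw [← h1, hRR x]
    simp [inner_add_left, real_inner_smul_left, real_inner_self_eq_norm_sq]
  have habs : ∀ x : H, |⟪Sb x, x⟫ - ⟪S x, x⟫| ≤ c * lam * ‖x‖ ^ 2 := by
    intro x
    have h1 : ⟪Sb x, x⟫ - ⟪S x, x⟫ = ⟪(Sb - S) x, x⟫ := by
      simp [ContinuousLinearMap.sub_apply, inner_sub_left]
    rw [h1, hclam]
    calc |⟪(Sb - S) x, x⟫| ≤ ‖(Sb - S) x‖ * ‖x‖ := abs_real_inner_le_norm _ _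
      _ ≤ (‖Sb - S‖ * ‖x‖) * ‖x‖ := by
          gcongr
          exact (Sb - S).le_opNorm x
      _ = ‖Sb - S‖ * ‖x‖ ^ 2 := by ring
  -- form comparisons between X = S + λ and Y = Sb + λ
  have hXleY : ∀ x : H, ‖R x‖ ^ 2 ≤ (1 + c) * (⟪Sb x, x⟫ + lam * ‖x‖ ^ 2) := by
    intro x
    have h1 := habs x
    have h2 := hSbpos x
    have h3 : 0 ≤ c * ⟪Sb x, x⟫ := mul_nonneg hc0 h2
    have h4 := hXX x
    rw [abs_le] at h1
    nlinarith [sq_nonneg ‖x‖]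
  have hYleX : ∀ x : H, (1 - c) * (⟪Sb x, x⟫ + lam * ‖x‖ ^ 2) ≤ ‖R x‖ ^ 2 := by
    intro x
    have h1 := habs x
    have h2 := hSbpos x
    have h3 : 0 ≤ c * ⟪Sb x, x⟫ := mul_nonneg hc0 h2
    have h4 := hXX x
    rw [abs_le] at h1
    nlinarith [sq_nonneg ‖x‖]
  -- Cauchy–Schwarz for the positive form Y = Sb + λ
  have hYCS : ∀ p r : H, (⟪Sb p, r⟫ + lam * ⟪p, r⟫) ^ 2 ≤
      (⟪Sb p, p⟫ + lam * ‖p‖ ^ 2) * (⟪Sb r, r⟫ + lam * ‖r‖ ^ 2) := by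
    intro p r
    have key : ∀ t : ℝ, 0 ≤ (⟪Sb r, r⟫ + lam * ‖r‖ ^ 2) * (t * t) +
        (2 * (⟪Sb p, r⟫ + lam * ⟪p, r⟫)) * t + (⟪Sb p, p⟫ + lam * ‖p‖ ^ 2) := by
      intro t
      have h0 : 0 ≤ ⟪Sb (p + t • r), p + t • r⟫ + lam * ‖p + t • r‖ ^ 2 :=
        add_nonneg (hSbpos _) (mul_nonneg hlam.le (sq_nonneg _))
      have e1 : ⟪Sb (p + t • r), p + t • r⟫ =
          ⟪Sb p, p⟫ + 2 * t * ⟪Sb p, r⟫ + t ^ 2 * ⟪Sb r, r⟫ := by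
        have hc1 : ⟪Sb r, p⟫ = ⟪Sb p, r⟫ := by
          rw [hSbsym r p, real_inner_comm]
        simp only [map_add, map_smul, inner_add_left, inner_add_right, inner_smul_left,
          inner_smul_right, RCLike.star_def, conj_trivial]
        rw [hc1]; ring
      have e2 : ‖p + t • r‖ ^ 2 = ‖p‖ ^ 2 + 2 * t * ⟪p, r⟫ + t ^ 2 * ‖r‖ ^ 2 := by
        rw [@norm_add_sq_real, real_inner_smul_right, norm_smul]
        simp [mul_pow, sq_abs]
        ring
      rw [e1, e2] at h0
      nlinarith [h0]
    have hd := discrim_le_zero key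
    rw [discrim] at hd
    nlinarith [hd]
  -- positivity of B
  have hqid : ∀ w : H, ⟪B w, w⟫ = ⟪Sb (B w), B w⟫ + lam * ‖B w‖ ^ 2 := by
    intro w
    have e : ⟪B w, w⟫ = ⟪B w, Sb (B w) + lam • B w⟫ := by rw [hYB w]
    rw [e]
    rw [inner_add_right, real_inner_smul_right, real_inner_comm (B w) (Sb (B w)),
      real_inner_self_eq_norm_sq]
  have hqnonneg : ∀ w : H, 0 ≤ ⟪B w, w⟫ := by
    intro w
    rw [hqid w]
    exact add_nonneg (hSbpos _) (mul_nonneg hlam.le (sq_nonneg _))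
  -- Step A : upper bound  ⟪B (R f), R f⟫ ≤ (1+c)‖f‖²
  have hA : ∀ f : H, ⟪B (R f), R f⟫ ≤ (1 + c) * ‖f‖ ^ 2 := by
    intro f
    set h := B (R f) with hh
    have hRf : Sb h + lam • h = R f := hYB (R f)
    have ha1 : ⟪B (R f), R f⟫ = ⟪R h, f⟫ := by
      rw [← hh, hRsym h f]
    have ha2 : ⟪B (R f), R f⟫ = ⟪Sb h, h⟫ + lam * ‖h‖ ^ 2 := hqid (R f)
    have hcs : |⟪R h, f⟫| ≤ ‖R h‖ * ‖f‖ := abs_real_inner_le_norm _ _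
    have hsq : ⟪R h, f⟫ ^ 2 ≤ ‖R h‖ ^ 2 * ‖f‖ ^ 2 := by
      rw [← sq_abs]
      calc |⟪R h, f⟫| ^ 2 ≤ (‖R h‖ * ‖f‖) ^ 2 := by
            apply pow_le_pow_left₀ (abs_nonneg _) hcs
        _ = ‖R h‖ ^ 2 * ‖f‖ ^ 2 := by ring
    have hup : ‖R h‖ ^ 2 ≤ (1 + c) * ⟪B (R f), R f⟫ := by
      rw [ha2]; exact hXleY h
    set a := ⟪B (R f), R f⟫ with hadef
    have ha0 : 0 ≤ a := hqnonneg (R f)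
    have key : a ^ 2 ≤ (1 + c) * a * ‖f‖ ^ 2 := by
      calc a ^ 2 = ⟪R h, f⟫ ^ 2 := by rw [ha1]
        _ ≤ ‖R h‖ ^ 2 * ‖f‖ ^ 2 := hsq
        _ ≤ ((1 + c) * a) * ‖f‖ ^ 2 := by
            apply mul_le_mul_of_nonneg_right hup (sq_nonneg _)
        _ = (1 + c) * a * ‖f‖ ^ 2 := by ring
    rcases ha0.lt_or_eq with hlt | heq
    · nlinarith [key, hlt]
    · rw [← heq]; positivity
  -- Step B on the range of R : lower bound
  have hB1 : ∀ p : H, (1 - c) * ‖R p‖ ^ 2 ≤ ⟪B (R (R p)), R (R p)⟫ := by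
    intro p
    have hRf : Sb (B (R (R p))) + lam • B (R (R p)) = R (R p) := hYB (R (R p))
    have e1 : ‖R p‖ ^ 2 = ⟪Sb p, B (R (R p))⟫ + lam * ⟪p, B (R (R p))⟫ := by
      have h0 : ‖R p‖ ^ 2 = ⟪p, R (R p)⟫ := by
        rw [← hRsym p (R p), real_inner_self_eq_norm_sq]
      rw [h0]
      conv_lhs => rw [← hRf]
      rw [inner_add_right, real_inner_smul_right, hSbsym p _]
    have hcs := hYCS p (B (R (R p)))
    have hq : ⟪B (R (R p)), R (R p)⟫ =
        ⟪Sb (B (R (R p))), B (R (R p))⟫ + lam * ‖B (R (R p))‖ ^ 2 := hqid (R (R p))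
    have hq0 : 0 ≤ ⟪B (R (R p)), R (R p)⟫ := hqnonneg (R (R p))
    have hY := hYleX p
    have e2 : (‖R p‖ ^ 2) ^ 2 ≤ (⟪Sb p, p⟫ + lam * ‖p‖ ^ 2) * ⟪B (R (R p)), R (R p)⟫ := by
      rw [e1, hq]; exact hcs
    by_cases hcase : c < 1
    · rcases eq_or_lt_of_le (sq_nonneg ‖R p‖) with hf0 | hfpos
      · rw [← hf0]
        simpa using hq0
      · nlinarith [mul_le_mul_of_nonneg_right hY hq0,
          mul_le_mul_of_nonneg_left e2 (show (0:ℝ) ≤ 1 - c by linarith), hfpos, hq0]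
    · push_neg at hcase
      have h1 : (1 - c) * ‖R p‖ ^ 2 ≤ 0 :=
        mul_nonpos_of_nonpos_of_nonneg (by linarith) (sq_nonneg _)
      exact h1.trans hq0
  -- density of the range of R
  have hinj : ∀ x : H, R x = 0 → x = 0 := by
    intro x hx
    have h1 : ‖R x‖ ^ 2 = 0 := by rw [hx]; simp
    have h2 := hXX x
    have h3 := hSpos x
    have h4 : lam * ‖x‖ ^ 2 ≤ 0 := by linarith
    have h5 : ‖x‖ ^ 2 ≤ 0 := by
      by_contra hcon
      push_neg at hcon
      nlinarith
    have : ‖x‖ = 0 := by nlinarith [sq_nonneg ‖x‖, norm_nonneg x]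
    exact norm_eq_zero.mp this
  have hdense : closure (Set.range fun p => R p) = Set.univ := by
    set K : Submodule ℝ H := LinearMap.range (R : H →ₗ[ℝ] H) with hK
    have hKbot : Kᗮ = ⊥ := by
      rw [Submodule.eq_bot_iff]
      intro x hx
      have h1 : ⟪R x, R x⟫ = 0 := by
        have hmem : R (R x) ∈ K := LinearMap.mem_range_self _ (R x)
        have h2 := (Submodule.mem_orthogonal K x).mp hx (R (R x)) hmem
        calc ⟪R x, R x⟫ = ⟪R (R x), x⟫ := (hRsym (R x) x).symm
          _ = 0 := by rw [← h2, real_inner_comm]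
      have h3 : R x = 0 := by
        have := real_inner_self_eq_norm_sq (R x)
        have h4 : ‖R x‖ = 0 := by nlinarith [norm_nonneg (R x)]
        exact norm_eq_zero.mp h4
      exact hinj x h3
    have hclos : K.topologicalClosure = ⊤ := by
      rw [← Submodule.orthogonal_orthogonal_eq_closure, hKbot, Submodule.bot_orthogonal_eq_top]
    have : (K.topologicalClosure : Set H) = (⊤ : Submodule ℝ H) := by rw [hclos]
    rw [Submodule.topologicalClosure_coe] at this
    rw [show (Set.range fun p => R p) = (K : Set H) by
      ext y; simp [hK, LinearMap.mem_range]]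
    simpa using this
  -- Step B for all f by continuity
  have hBlow : ∀ f : H, (1 - c) * ‖f‖ ^ 2 ≤ ⟪B (R f), R f⟫ := by
    have hCclosed : IsClosed {f : H | (1 - c) * ‖f‖ ^ 2 ≤ ⟪B (R f), R f⟫} := by
      apply isClosed_le
      · fun_prop
      · exact Continuous.inner ((B.comp R).continuous) R.continuous
    have hsub : (Set.range fun p => R p) ⊆ {f : H | (1 - c) * ‖f‖ ^ 2 ≤ ⟪B (R f), R f⟫} := by
      rintro _ ⟨p, rfl⟩
      exact hB1 p
    have := hCclosed.closure_subset_iff.mpr hsub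
    rw [hdense] at this
    intro f
    exact this (Set.mem_univ f)
  -- the operator T = I - R B R
  set T : H →L[ℝ] H := ContinuousLinearMap.id ℝ H - R ∘L B ∘L R with hT
  have hTapp : ∀ f : H, T f = f - R (B (R f)) := by
    intro f; simp [hT]
  have hTform : ∀ f : H, ⟪T f, f⟫ = ‖f‖ ^ 2 - ⟪B (R f), R f⟫ := by
    intro f
    rw [hTapp f, inner_sub_left, real_inner_self_eq_norm_sq, hRsym (B (R f)) f,
      real_inner_comm]
  have hbound : ∀ f : H, |⟪T f, f⟫| ≤ c * ‖f‖ ^ 2 := by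
    intro f
    rw [hTform f, abs_le]
    constructor
    · have := hA f; linarith
    · have := hBlow f; linarith
  -- T is symmetric
  have hTsym : ∀ u v : H, ⟪T u, v⟫ = ⟪u, T v⟫ := by
    intro u v
    rw [hTapp u, hTapp v, inner_sub_left, inner_sub_right]
    congr 1
    have hBsym : ∀ x y : H, ⟪B x, y⟫ = ⟪x, B y⟫ := by
      intro x y
      have e : ⟪B x, y⟫ = ⟪B x, Sb (B y) + lam • B y⟫ := by rw [hYB y]
      rw [e, inner_add_right, real_inner_smul_right, ← hSbsym (B x) (B y)]
      have e2 : ⟪x, B y⟫ = ⟪Sb (B x) + lam • B x, B y⟫ := by rw [hYB x]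
      rw [e2, inner_add_left, real_inner_smul_left]
    rw [hRsym (B (R u)) v, hBsym (R u) (R v), hRsym u (B (R v))]
  -- polarization: pointwise norm bound
  have hTnorm : ∀ f : H, ‖T f‖ ≤ c * ‖f‖ := by
    intro f
    by_cases hTf : T f = 0
    · rw [hTf]; simp; positivity
    · have hTfpos : 0 < ‖T f‖ := norm_pos_iff.mpr hTf
      have hfne : f ≠ 0 := by
        intro h0; apply hTf; rw [h0, map_zero]
      have hfpos : 0 < ‖f‖ := norm_pos_iff.mpr hfne
      set u := f with hu
      set v := (‖f‖ / ‖T f‖) • T f with hv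
      have hvnorm : ‖v‖ = ‖f‖ := by
        rw [hv, norm_smul, Real.norm_eq_abs, abs_div, abs_of_nonneg (norm_nonneg f),
          abs_of_nonneg (norm_nonneg (T f))]
        exact div_mul_cancel₀ _ hTfpos.ne'
      have hTuv : ⟪T u, v⟫ = ‖f‖ * ‖T f‖ := by
        rw [hv, real_inner_smul_right, real_inner_self_eq_norm_sq, hu]
        have hne : ‖T f‖ ≠ 0 := hTfpos.ne'
        rw [div_mul_eq_mul_div, eq_comm, eq_div_iff hne]
        ring
      have hpolar : ⟪T (u + v), u + v⟫ - ⟪T (u - v), u - v⟫ = 4 * ⟪T u, v⟫ := by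
        have hvu : ⟪T v, u⟫ = ⟪T u, v⟫ := by
          rw [hTsym v u, real_inner_comm]
        simp only [map_add, map_sub, inner_add_left, inner_add_right, inner_sub_left,
          inner_sub_right]
        rw [hvu]; ring
      have hb1 := hbound (u + v)
      have hb2 := hbound (u - v)
      rw [abs_le] at hb1 hb2
      have hpar : ‖u + v‖ ^ 2 + ‖u - v‖ ^ 2 = 2 * (‖u‖ ^ 2 + ‖v‖ ^ 2) := by
        have := parallelogram_law_with_norm ℝ u v
        nlinarith [this]
      have key : 4 * (‖f‖ * ‖T f‖) ≤ 4 * c * ‖f‖ ^ 2 := by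
        have h1 : ⟪T (u + v), u + v⟫ ≤ c * ‖u + v‖ ^ 2 := hb1.2
        have h2 : -(c * ‖u - v‖ ^ 2) ≤ ⟪T (u - v), u - v⟫ := hb2.1
        have h3 : 4 * ⟪T u, v⟫ ≤ c * ‖u + v‖ ^ 2 + c * ‖u - v‖ ^ 2 := by
          rw [← hpolar]; linarith
        have h4 : c * ‖u + v‖ ^ 2 + c * ‖u - v‖ ^ 2 = 2 * c * (‖u‖ ^ 2 + ‖v‖ ^ 2) := by
          nlinarith [hpar]
        rw [hTuv] at h3
        rw [h4] at h3
        have h5 : ‖u‖ = ‖f‖ := rfl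
        rw [h5, hvnorm] at h3
        nlinarith [h3]
      have := mul_le_mul_of_nonneg_left (le_refl (0:ℝ)) (le_refl (0:ℝ))
      nlinarith [key, hfpos]
  calc ‖T‖ ≤ c := ContinuousLinearMap.opNorm_le_bound T hc0 hTnorm
    _ = (1 / lam) * ‖Sb - S‖ := hc.symm ▸ rfl
end

section
/- Let (X, Y) be random variables with X taking values in ℝ^p. Among all subsets S ⊆ {1,…,p} satisfying (i) E[Y | X] = E[Y | X_S] almost surely and (ii) X_S is independent of X_{S^c}, there exists a unique minimal one: if A and B both satisfy (i), (ii), and neither has a strict subset satisfying (i) and (ii), then A = B. -/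
open MeasureTheory ProbabilityTheory

section Aux

variable {Ω : Type*}

/-- The π-system of intersections generating the sup of two σ-algebras. -/
def interPiSys (m₂ m₃ : MeasurableSpace Ω) : Set (Set Ω) :=
  {s | ∃ t₂ t₃, MeasurableSet[m₂] t₂ ∧ MeasurableSet[m₃] t₃ ∧ s = t₂ ∩ t₃}

lemma interPiSys_isPiSystem (m₂ m₃ : MeasurableSpace Ω) : IsPiSystem (interPiSys m₂ m₃) := by
  rintro s ⟨a, b, ha, hb, rfl⟩ t ⟨c, d, hc, hd, rfl⟩ -
  exact ⟨a ∩ c, b ∩ d, ha.inter hc, hb.inter hd, Set.inter_inter_inter_comm a b c d⟩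

lemma sup_eq_generateFrom_interPiSys (m₂ m₃ : MeasurableSpace Ω) :
    m₂ ⊔ m₃ = MeasurableSpace.generateFrom (interPiSys m₂ m₃) := by
  refine le_antisymm (sup_le ?_ ?_) (MeasurableSpace.generateFrom_le ?_)
  · intro s hs
    exact MeasurableSpace.measurableSet_generateFrom
      ⟨s, Set.univ, hs, MeasurableSet.univ, (Set.inter_univ s).symm⟩
  · intro s hs
    exact MeasurableSpace.measurableSet_generateFrom
      ⟨Set.univ, s, MeasurableSet.univ, hs, (Set.univ_inter s).symm⟩
  · rintro s ⟨t₂, t₃, h₂, h₃, rfl⟩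
    exact ((le_sup_left : m₂ ≤ m₂ ⊔ m₃) _ h₂).inter ((le_sup_right : m₃ ≤ m₂ ⊔ m₃) _ h₃)

/-- If `m₁ ⊔ m₂` is independent of `m₃` and `m₁` is independent of `m₂`, then `m₁` is
independent of `m₂ ⊔ m₃`. -/
lemma aux_indep_sup {m₁ m₂ m₃ : MeasurableSpace Ω} {m0 : MeasurableSpace Ω}
    {μ : Measure Ω} [IsProbabilityMeasure μ]
    (h₁ : m₁ ≤ m0) (h₂ : m₂ ≤ m0) (h₃ : m₃ ≤ m0)
    (h12_3 : Indep (m₁ ⊔ m₂) m₃ μ) (h12 : Indep m₁ m₂ μ) : Indep m₁ (m₂ ⊔ m₃) μ := by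
  have h23 : Indep m₂ m₃ μ := indep_of_indep_of_le_left h12_3 le_sup_right
  rw [Indep_iff] at h12 h23 h12_3
  refine IndepSets.indep h₁ (sup_le h₂ h₃) ?_ (interPiSys_isPiSystem m₂ m₃)
    (@MeasurableSpace.generateFrom_measurableSet Ω m₁).symm
    (sup_eq_generateFrom_interPiSys m₂ m₃) ?_
  · exact @MeasurableSpace.isPiSystem_measurableSet Ω m₁
  · rw [IndepSets_iff]
    rintro t1 s ht1 ⟨t₂, t₃, hm2, hm3, rfl⟩
    have e1 : μ (t1 ∩ (t₂ ∩ t₃)) = μ ((t1 ∩ t₂) ∩ t₃) := by rw [Set.inter_assoc]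
    rw [e1, h12_3 _ _ ((le_sup_left : m₁ ≤ m₁ ⊔ m₂) _ ht1 |>.inter
      ((le_sup_right : m₂ ≤ m₁ ⊔ m₂) _ hm2)) hm3, h12 _ _ ht1 hm2, h23 _ _ hm2 hm3,
      mul_assoc]

/-- Set-integral of an independent product: if `g` is `m₁`-measurable, `t₂ ∈ m₁`, `t₃ ∈ m₃`
and `m₁ ⟂ m₃`, then the integral over `t₂ ∩ t₃` factorizes. -/
lemma aux_setIntegral_inter {m₁ m₃ : MeasurableSpace Ω} {m0 : MeasurableSpace Ω}
    {μ : Measure Ω} [IsProbabilityMeasure μ] (h₁ : m₁ ≤ m0) (h₃ : m₃ ≤ m0)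
    (hind : Indep m₁ m₃ μ) {g : Ω → ℝ} (hg : Integrable g μ)
    (hgm : StronglyMeasurable[m₁] g) {t₂ t₃ : Set Ω}
    (ht₂ : MeasurableSet[m₁] t₂) (ht₃ : MeasurableSet[m₃] t₃) :
    ∫ x in t₂ ∩ t₃, g x ∂μ = (μ t₃).toReal * ∫ x in t₂, g x ∂μ := by
  set u : Ω → ℝ := t₂.indicator g with hu
  set v : Ω → ℝ := t₃.indicator 1 with hv
  have hum : StronglyMeasurable[m₁] u := hgm.indicator ht₂
  have hvm : StronglyMeasurable[m₃] v := stronglyMeasurable_const.indicator ht₃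
  have huv : IndepFun u v μ := by
    rw [IndepFun_iff_Indep]
    exact indep_of_indep_of_le_left
      (indep_of_indep_of_le_right hind hvm.measurable.comap_le) hum.measurable.comap_le
  have hu_int : Integrable u μ := hg.indicator (h₁ _ ht₂)
  have hv_int : Integrable v μ := (integrable_const (1 : ℝ)).indicator (h₃ _ ht₃)
  have h1 : ∫ x in t₂ ∩ t₃, g x ∂μ = ∫ x, (u * v) x ∂μ := by
    rw [← integral_indicator ((h₁ _ ht₂).inter (h₃ _ ht₃))]
    congr 1
    funext x
    by_cases hx2 : x ∈ t₂ <;> by_cases hx3 : x ∈ t₃ <;>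
      simp [hu, hv, Set.indicator, hx2, hx3, Set.mem_inter_iff]
  have h2 : ∫ x, u x ∂μ = ∫ x in t₂, g x ∂μ := integral_indicator (h₁ _ ht₂)
  have h3 : ∫ x, v x ∂μ = (μ t₃).toReal := by
    rw [hv, integral_indicator (h₃ _ ht₃)]
    simp
    rfl
  rw [h1, huv.integral_mul_eq_mul_integral hu_int.aestronglyMeasurable hv_int.aestronglyMeasurable]
  show (∫ x, u x ∂μ) * ∫ x, v x ∂μ = _
  rw [h2, h3, mul_comm]

/-- Dropping an independent σ-algebra from conditioning: if `f` is `m₁`-measurable,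
`m₂ ≤ m₁`, and `m₁ ⟂ m₃`, then `E[f | m₂ ⊔ m₃] = E[f | m₂]` a.s. -/
lemma aux_condexp_sup {m₁ m₂ m₃ : MeasurableSpace Ω} {m0 : MeasurableSpace Ω}
    {μ : Measure Ω} [IsProbabilityMeasure μ] (h21 : m₂ ≤ m₁) (h₁ : m₁ ≤ m0)
    (h₃ : m₃ ≤ m0) {f : Ω → ℝ} (hf : Integrable f μ) (hfm : StronglyMeasurable[m₁] f)
    (hind : Indep m₁ m₃ μ) : μ[f | m₂ ⊔ m₃] =ᵐ[μ] μ[f | m₂] := by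
  have h₂ : m₂ ≤ m0 := h21.trans h₁
  have h23 : m₂ ⊔ m₃ ≤ m0 := sup_le h₂ h₃
  have key : ∀ t : Set Ω, MeasurableSet[m₂ ⊔ m₃] t →
      ∫ x in t, (μ[f|m₂]) x ∂μ = ∫ x in t, f x ∂μ := by
    have hgm : StronglyMeasurable[m₁] (μ[f|m₂]) := stronglyMeasurable_condExp.mono h21
    intro t ht
    refine MeasurableSpace.induction_on_inter (m := m₂ ⊔ m₃)
      (C := fun t _ => ∫ x in t, (μ[f|m₂]) x ∂μ = ∫ x in t, f x ∂μ)
      (sup_eq_generateFrom_interPiSys m₂ m₃) (interPiSys_isPiSystem m₂ m₃) ?_ ?_ ?_ ?_ t ht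
    · simp
    · rintro s ⟨t₂, t₃, hm2, hm3, rfl⟩
      rw [aux_setIntegral_inter h₁ h₃ hind hf hfm (h21 _ hm2) hm3,
        aux_setIntegral_inter h₁ h₃ hind integrable_condExp hgm (h21 _ hm2) hm3,
        setIntegral_condExp h₂ hf hm2]
    · intro s hs hs_eq
      have h1 := integral_add_compl (h23 _ hs) integrable_condExp
        (μ := μ) (f := μ[f|m₂])
      have h2 := integral_add_compl (h23 _ hs) hf (μ := μ)
      have h3 : ∫ x, (μ[f|m₂]) x ∂μ = ∫ x, f x ∂μ := integral_condExp h₂ (f := f)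
      linarith
    · intro s hd hsm hs_eq
      rw [integral_iUnion (fun i => h23 _ (hsm i)) hd integrable_condExp.integrableOn,
        integral_iUnion (fun i => h23 _ (hsm i)) hd hf.integrableOn]
      exact tsum_congr hs_eq
  exact (ae_eq_condExp_of_forall_setIntegral_eq h23 hf
    (fun s _ _ => integrable_condExp.integrableOn)
    (fun s hs _ => key s hs)
    ((stronglyMeasurable_condExp.mono (le_sup_left : m₂ ≤ m₂ ⊔ m₃) :
      StronglyMeasurable[m₂ ⊔ m₃] (μ[f|m₂])).aestronglyMeasurable)).symm

end Aux

/-- Existence and uniqueness of the minimal signal set (Markov blanket with independence).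
Among subsets `S` of coordinates such that (i) `E[Y|X] = E[Y|X_S]` a.s. and
(ii) `X_S ⟂ X_{Sᶜ}`, there is a minimal one, and any two minimal such subsets coincide. -/
theorem stmt_17 {Ω : Type*} [MeasurableSpace Ω] (μ : Measure Ω) [IsProbabilityMeasure μ]
    {p : ℕ} (X : Ω → (Fin p → ℝ)) (Y : Ω → ℝ)
    (hX : Measurable X) (hY : Integrable Y μ)
    (mS : Finset (Fin p) → MeasurableSpace Ω)
    (hmS : ∀ S : Finset (Fin p),
      mS S = MeasurableSpace.comap (fun ω => fun i : S => X ω i) inferInstance)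
    (good : Finset (Fin p) → Prop)
    (hgood : ∀ S : Finset (Fin p), good S ↔
      ((μ[Y | mS S] =ᵐ[μ] μ[Y | mS Finset.univ]) ∧ Indep (mS S) (mS Sᶜ) μ)) :
    (∃ S : Finset (Fin p), good S ∧ ∀ S' ⊂ S, ¬ good S') ∧
    (∀ A B : Finset (Fin p), good A → good B →
      (∀ A' ⊂ A, ¬ good A') → (∀ B' ⊂ B, ¬ good B') → A = B) := by
  classical
  set m : Fin p → MeasurableSpace Ω :=
    fun i => MeasurableSpace.comap (fun ω => X ω i) inferInstance with hm
  have hmS' : ∀ S : Finset (Fin p), mS S = ⨆ i ∈ S, m i := by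
    intro S
    rw [hmS S]
    have hpi : (inferInstance : MeasurableSpace (↥S → ℝ)) =
        ⨆ i : S, MeasurableSpace.comap (fun g : ↥S → ℝ => g i) inferInstance := rfl
    rw [hpi, MeasurableSpace.comap_iSup]
    simp_rw [MeasurableSpace.comap_comp]
    rw [iSup_subtype]
    rfl
  have hle : ∀ S : Finset (Fin p), mS S ≤ ‹MeasurableSpace Ω› := by
    intro S
    rw [hmS' S]
    exact iSup₂_le fun i _ => Measurable.comap_le ((measurable_pi_apply i).comp hX)
  have hmono : ∀ {S T : Finset (Fin p)}, S ⊆ T → mS S ≤ mS T := by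
    intro S T h
    rw [hmS' S, hmS' T]
    exact biSup_mono h
  have hsup : ∀ S T : Finset (Fin p), mS (S ∪ T) = mS S ⊔ mS T := by
    intro S T
    refine le_antisymm ?_
      (sup_le (hmono Finset.subset_union_left) (hmono Finset.subset_union_right))
    rw [hmS' (S ∪ T)]
    refine iSup₂_le fun i hi => ?_
    rcases Finset.mem_union.mp hi with h | h
    · exact le_sup_of_le_left (by rw [hmS' S]; exact le_biSup _ h)
    · exact le_sup_of_le_right (by rw [hmS' T]; exact le_biSup _ h)
  have hbot : mS ∅ = ⊥ := by
    rw [hmS']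
    simp
  -- `univ` is good
  have hgu : good Finset.univ := by
    rw [hgood]
    refine ⟨Filter.EventuallyEq.rfl, ?_⟩
    have h : mS Finset.univᶜ = ⊥ := by rw [Finset.compl_univ, hbot]
    rw [h]
    exact indep_bot_right _
  -- the intersection of two good sets is good
  have hinter : ∀ A B : Finset (Fin p), good A → good B → good (A ∩ B) := by
    intro A B hA hB
    rw [hgood] at hA hB ⊢
    obtain ⟨hAc, hAi⟩ := hA
    obtain ⟨hBc, hBi⟩ := hB
    have hCA : A ∩ B ⊆ A := Finset.inter_subset_left
    have hCB : A ∩ B ⊆ B := Finset.inter_subset_right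
    have hDBc : (A \ B : Finset (Fin p)) ⊆ Bᶜ := by
      intro i hi
      rw [Finset.mem_compl]
      exact (Finset.mem_sdiff.mp hi).2
    have hDAc : (Aᶜ : Finset (Fin p)) ⊆ Aᶜ := le_rfl
    have hA_split : mS A = mS (A ∩ B) ⊔ mS (A \ B) := by
      rw [← hsup]
      congr 1
      ext i
      simp only [Finset.mem_union, Finset.mem_inter, Finset.mem_sdiff]
      tauto
    have hAcompl : (A ∩ B)ᶜ = (A \ B) ∪ Aᶜ := by
      ext i
      simp only [Finset.mem_compl, Finset.mem_inter, Finset.mem_union, Finset.mem_sdiff]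
      tauto
    constructor
    · -- conditional expectation property
      have h1 : μ[Y | mS (A ∩ B)] =ᵐ[μ] μ[(μ[Y | mS A]) | mS (A ∩ B)] :=
        (condExp_condExp_of_le (hmono hCA) (hle A)).symm
      have h2 : μ[(μ[Y | mS A]) | mS (A ∩ B)] =ᵐ[μ] μ[(μ[Y | mS B]) | mS (A ∩ B)] :=
        condExp_congr_ae (hAc.trans hBc.symm)
      have h3 : μ[(μ[Y | mS B]) | mS (A ∩ B)] =ᵐ[μ] μ[(μ[Y | mS B]) | mS A] := by
        have h := aux_condexp_sup (μ := μ) (f := μ[Y | mS B])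
          (m₁ := mS B) (m₂ := mS (A ∩ B)) (m₃ := mS (A \ B))
          (hmono hCB) (hle B) (hle (A \ B)) integrable_condExp stronglyMeasurable_condExp
          (indep_of_indep_of_le_right hBi (hmono hDBc))
        rw [← hA_split] at h
        exact h.symm
      have h4 : μ[(μ[Y | mS B]) | mS A] =ᵐ[μ] μ[(μ[Y | mS Finset.univ]) | mS A] :=
        condExp_congr_ae hBc
      have h5 : μ[(μ[Y | mS Finset.univ]) | mS A] =ᵐ[μ] μ[Y | mS A] :=
        condExp_condExp_of_le (hmono (Finset.subset_univ A)) (hle Finset.univ)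
      exact ((((h1.trans h2).trans h3).trans h4).trans h5).trans hAc
    · -- independence property
      rw [hAcompl, hsup]
      refine aux_indep_sup (hle _) (hle _) (hle _) ?_ ?_
      · rw [← hA_split]
        exact hAi
      · exact indep_of_indep_of_le_left
          (indep_of_indep_of_le_right hBi (hmono hDBc)) (hmono hCB)
  -- existence of a minimal good set
  have hmin : ∀ n : ℕ, ∀ S : Finset (Fin p), S.card ≤ n → good S →
      ∃ T, good T ∧ ∀ T' ⊂ T, ¬ good T' := by
    intro n
    induction n with
    | zero =>
      intro S hc hS
      have hS0 : S = ∅ := Finset.card_eq_zero.mp (Nat.le_zero.mp hc)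
      subst hS0
      exact ⟨∅, hS, fun T' hT' _ => (Finset.not_ssubset_empty T') hT'⟩
    | succ n ih =>
      intro S hc hS
      by_cases h : ∃ S' ⊂ S, good S'
      · obtain ⟨S', hsub, hS'⟩ := h
        have := Finset.card_lt_card hsub
        exact ih S' (by omega) hS'
      · exact ⟨S, hS, fun T' hT' hT'g => h ⟨T', hT', hT'g⟩⟩
  obtain ⟨T, hT, hTmin⟩ := hmin (Finset.univ.card) Finset.univ le_rfl hgu
  refine ⟨⟨T, hT, hTmin⟩, ?_⟩
  intro A B hA hB hAmin hBmin
  have hABg := hinter A B hA hB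
  have hA' : A ∩ B = A := by
    by_contra h
    exact hAmin (A ∩ B) (Finset.ssubset_iff_subset_ne.mpr ⟨Finset.inter_subset_left, h⟩) hABg
  have hB' : A ∩ B = B := by
    by_contra h
    exact hBmin (A ∩ B) (Finset.ssubset_iff_subset_ne.mpr ⟨Finset.inter_subset_right, h⟩) hABg
  rw [← hA', hB']
end

section
/- Let p : ℝ → ℝ be an integrable function with ∫ p(x) dx = 0 and sufficient decay (e.g., compactly supported and bounded). Then ∬ p(x) p(x') |x − x'| dx dx' = −∫_ℝ |∫ p(x) e^{iωx} dx|² · dω/(π ω²). In particular, ∬ p(x)p(x')|x−x'| dx dx' ≤ 0. -/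
open MeasureTheory Real Set Filter


lemma kb {a C : ℝ} (h : a^2 ≤ C) (ω : ℝ) :
    (1 - Real.cos (a*ω)) * (ω^2)⁻¹ ≤ (C+4) * (1+ω^2)⁻¹ := by
  have hC : 0 ≤ C := le_trans (sq_nonneg a) h
  have h1 : 0 ≤ 1 - Real.cos (a*ω) := by nlinarith [Real.cos_le_one (a*ω)]
  rcases eq_or_ne ω 0 with rfl | hω
  · simp; positivity
  have hω2 : 0 < ω^2 := by positivity
  have h3 : (0:ℝ) < 1 + ω^2 := by positivity
  rw [← div_eq_mul_inv, ← div_eq_mul_inv, div_le_div_iff₀ hω2 h3]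
  rcases le_or_gt (ω^2) 1 with hw | hw
  · have hb : 1 - Real.cos (a*ω) ≤ (a*ω)^2/2 := by
      nlinarith [Real.one_sub_sq_div_two_le_cos (x := a*ω)]
    nlinarith [mul_le_mul_of_nonneg_right hb h3.le, mul_le_mul_of_nonneg_right h (sq_nonneg ω),
      mul_le_mul_of_nonneg_left hw (mul_nonneg (mul_nonneg (sq_nonneg a) (sq_nonneg ω)) (by norm_num : (0:ℝ) ≤ 1/2))]
  · have hb : 1 - Real.cos (a*ω) ≤ 2 := by nlinarith [Real.neg_one_le_cos (a*ω)]
    nlinarith [mul_le_mul_of_nonneg_right hb h3.le]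


lemma L3int {ω : ℝ} (hω : 0 < ω) : IntegrableOn (fun s : ℝ => s * Real.exp (-(ω*s))) (Ioi 0) := by
  have h2 : 0 < ω/2 := by linarith
  have hc : Continuous fun s : ℝ => s * Real.exp (-(ω*s)) := by fun_prop
  refine ((exp_neg_integrableOn_Ioi 0 h2).const_mul (2/ω)).mono' hc.aestronglyMeasurable ?_
  filter_upwards [ae_restrict_mem measurableSet_Ioi] with s hs
  have hs' : (0:ℝ) < s := hs
  rw [Real.norm_eq_abs, abs_of_nonneg (by positivity)]
  have key : s ≤ (2/ω) * Real.exp (ω/2*s) := by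
    have h0 : ω/2*s + 1 ≤ Real.exp (ω/2*s) := Real.add_one_le_exp _
    calc s = (2/ω) * (ω/2*s) := by field_simp
      _ ≤ (2/ω) * Real.exp (ω/2*s) := by
          gcongr
          nlinarith [Real.exp_pos (ω/2*s)]
  calc s * Real.exp (-(ω*s)) ≤ ((2/ω) * Real.exp (ω/2*s)) * Real.exp (-(ω*s)) := by gcongr
    _ = (2/ω) * Real.exp (-(ω/2)*s) := by rw [mul_assoc, ← Real.exp_add]; ring_nf

lemma L3 {ω : ℝ} (hω : 0 < ω) : ∫ s in Ioi (0:ℝ), s * Real.exp (-(ω*s)) = (ω^2)⁻¹ := by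
  have h := Real.integral_rpow_mul_exp_neg_mul_Ioi (a := 2) (r := ω) (by norm_num) hω
  rw [Real.Gamma_two, mul_one] at h
  have e1 : EqOn (fun t : ℝ => t ^ ((2:ℝ)-1) * Real.exp (-(ω*t)))
      (fun t : ℝ => t * Real.exp (-(ω*t))) (Ioi 0) := by
    intro t ht
    simp only
    rw [show (2:ℝ)-1 = 1 by norm_num, Real.rpow_one]
  rw [setIntegral_congr_fun measurableSet_Ioi e1] at h
  rw [h, show ((2:ℝ)) = ((2:ℕ):ℝ) by norm_num, Real.rpow_natCast]
  rw [one_div, inv_pow]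

lemma L2 {s : ℝ} (hs : 0 < s) : ∫ ω in Ioi (0:ℝ), Real.exp (-(s*ω)) = s⁻¹ := by
  have h := Real.integral_rpow_mul_exp_neg_mul_Ioi (a := 1) (r := s) (by norm_num) hs
  rw [Real.Gamma_one, mul_one, Real.rpow_one, one_div] at h
  have e1 : EqOn (fun t : ℝ => t ^ ((1:ℝ)-1) * Real.exp (-(s*t)))
      (fun t : ℝ => Real.exp (-(s*t))) (Ioi 0) := by
    intro t ht
    simp only
    rw [sub_self, Real.rpow_zero, one_mul]
  rw [setIntegral_congr_fun measurableSet_Ioi e1] at h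
  exact h

lemma L1cosint {s : ℝ} (hs : 0 < s) :
    IntegrableOn (fun ω => Real.exp (-(s*ω)) * Real.cos ω) (Ioi 0) := by
  refine (exp_neg_integrableOn_Ioi 0 hs).mono'
    (Continuous.aestronglyMeasurable (by fun_prop)) ?_
  filter_upwards with ω
  rw [Real.norm_eq_abs, abs_mul]
  calc |Real.exp (-(s*ω))| * |Real.cos ω| ≤ |Real.exp (-(s*ω))| * 1 := by
        gcongr; exact Real.abs_cos_le_one ω
    _ = Real.exp (-s*ω) := by rw [mul_one, abs_of_pos (Real.exp_pos _), neg_mul]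

lemma L1 {s : ℝ} (hs : 0 < s) :
    ∫ ω in Ioi (0:ℝ), Real.exp (-(s*ω)) * Real.cos ω = s/(s^2+1) := by
  have h1 : (0:ℝ) < s^2+1 := by positivity
  set F : ℝ → ℝ := fun ω => Real.exp (-(s*ω)) * (Real.sin ω - s * Real.cos ω) / (s^2+1) with hF
  have hderiv : ∀ ω : ℝ, HasDerivAt F (Real.exp (-(s*ω)) * Real.cos ω) ω := by
    intro ω
    have h2 : HasDerivAt (fun ω : ℝ => -(s*ω)) (-s) ω := by
      exact (((hasDerivAt_id' ω).const_mul s).neg).congr_deriv (by ring)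
    have he : HasDerivAt (fun ω => Real.exp (-(s*ω))) (Real.exp (-(s*ω)) * (-s)) ω :=
      (Real.hasDerivAt_exp _).comp ω h2
    have hsin : HasDerivAt (fun ω => Real.sin ω - s * Real.cos ω)
        (Real.cos ω + s * Real.sin ω) ω := by
      exact ((Real.hasDerivAt_sin ω).sub ((Real.hasDerivAt_cos ω).const_mul s)).congr_deriv (by ring)
    have := (he.mul hsin).div_const (s^2+1)
    exact this.congr_deriv (by rw [div_eq_iff h1.ne']; ring)
  have htend : Tendsto F atTop (nhds 0) := by
    have hbnd : ∀ ω : ℝ, ‖F ω‖ ≤ (1+s)/(s^2+1) * Real.exp (-(s*ω)) := by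
      intro ω
      rw [hF, Real.norm_eq_abs]
      simp only
      rw [abs_div, abs_of_pos h1, div_le_iff₀ h1, abs_mul,
        abs_of_pos (Real.exp_pos _)]
      have : |Real.sin ω - s * Real.cos ω| ≤ 1 + s := by
        calc |Real.sin ω - s * Real.cos ω| ≤ |Real.sin ω| + |s * Real.cos ω| := abs_sub _ _
          _ ≤ 1 + s := by
              rw [abs_mul, abs_of_pos hs]
              gcongr
              · exact Real.abs_sin_le_one ω
              · calc s * |Real.cos ω| ≤ s * 1 := by gcongr; exact Real.abs_cos_le_one ω
                  _ = s := mul_one s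
      calc Real.exp (-(s*ω)) * |Real.sin ω - s * Real.cos ω|
          ≤ Real.exp (-(s*ω)) * (1+s) := by gcongr
        _ = (1+s)/(s^2+1) * Real.exp (-(s*ω)) * (s^2+1) := by field_simp
    refine squeeze_zero_norm hbnd ?_
    rw [show (0:ℝ) = (1+s)/(s^2+1) * 0 by ring]
    exact Tendsto.const_mul _ (tendsto_exp_neg_atTop_nhds_zero.comp
        (tendsto_id.const_mul_atTop hs))
  have h := integral_Ioi_of_hasDerivAt_of_tendsto (f := F)
    (hderiv 0).continuousAt.continuousWithinAt (fun x _ => hderiv x) (L1cosint hs) htend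
  rw [h, hF]
  simp only [mul_zero, neg_zero, Real.exp_zero, Real.sin_zero, Real.cos_zero, one_mul, mul_one,
    zero_sub]
  field_simp

-- inner integral in ω for fixed s > 0
lemma L4 {s : ℝ} (hs : 0 < s) :
    ∫ ω in Ioi (0:ℝ), (1 - Real.cos ω) * (s * Real.exp (-(ω*s))) = (1+s^2)⁻¹ := by
  have e : EqOn (fun ω : ℝ => (1 - Real.cos ω) * (s * Real.exp (-(ω*s))))
      (fun ω : ℝ => s * Real.exp (-(s*ω)) - s * (Real.exp (-(s*ω)) * Real.cos ω)) (Ioi 0) := by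
    intro ω _
    simp only [mul_comm ω s]
    ring
  rw [setIntegral_congr_fun measurableSet_Ioi e, integral_sub, integral_const_mul,
    integral_const_mul, L2 hs, L1 hs]
  · field_simp
    ring
  · exact ((exp_neg_integrableOn_Ioi 0 hs).congr_fun
      (fun ω _ => by rw [neg_mul]) measurableSet_Ioi).const_mul s
  · exact (L1cosint hs).const_mul s

lemma gmeas : Measurable fun ω : ℝ => (1 - Real.cos ω) * (ω^2)⁻¹ := by
  exact (measurable_const.sub Real.measurable_cos).mul ((measurable_id.pow_const 2).inv)

lemma gint : Integrable (fun ω : ℝ => (1 - Real.cos ω) * (ω^2)⁻¹) := by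
  refine (integrable_inv_one_add_sq.const_mul ((1:ℝ)+4)).mono' gmeas.aestronglyMeasurable ?_
  filter_upwards with ω
  rw [Real.norm_eq_abs, abs_of_nonneg (mul_nonneg (by nlinarith [Real.cos_le_one ω]) (by positivity))]
  have := kb (a := 1) (C := 1) (by norm_num) ω
  simpa using this


set_option maxHeartbeats 1000000 in
lemma L5 : ∫ ω in Ioi (0:ℝ), (1 - Real.cos ω) * (ω^2)⁻¹ = π/2 := by
  set μ := volume.restrict (Ioi (0:ℝ)) with hμ
  have hmf : AEStronglyMeasurable
      (Function.uncurry fun ω s : ℝ => (1 - Real.cos ω) * (s * Real.exp (-(ω*s)))) (μ.prod μ) :=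
    Continuous.aestronglyMeasurable (by fun_prop)
  have hintp : Integrable
      (Function.uncurry fun ω s : ℝ => (1 - Real.cos ω) * (s * Real.exp (-(ω*s)))) (μ.prod μ) := by
    refine (integrable_prod_iff hmf).mpr ⟨?_, ?_⟩
    · simp only [Function.uncurry_apply_pair]
      filter_upwards [ae_restrict_mem measurableSet_Ioi] with ω hω
      exact ((L3int hω).const_mul _)
    · simp only [Function.uncurry_apply_pair]
      have hmeas : AEStronglyMeasurable
          (fun ω : ℝ => ∫ s, ‖(1 - Real.cos ω) * (s * Real.exp (-(ω*s)))‖ ∂μ) μ := by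
        have := hmf.norm.integral_prod_right'
        simpa [Function.uncurry] using this
      refine (gint.restrict (s := Ioi 0)).mono' hmeas ?_
      filter_upwards [ae_restrict_mem measurableSet_Ioi] with ω hω
      have hnn : 0 ≤ 1 - Real.cos ω := by nlinarith [Real.cos_le_one ω]
      have he : ∫ s, ‖(1 - Real.cos ω) * (s * Real.exp (-(ω*s)))‖ ∂μ
          = (1 - Real.cos ω) * (ω^2)⁻¹ := by
        have h2 : ∀ s ∈ Ioi (0:ℝ), ‖(1 - Real.cos ω) * (s * Real.exp (-(ω*s)))‖
            = (1 - Real.cos ω) * (s * Real.exp (-(ω*s))) := by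
          intro s hs
          rw [Real.norm_eq_abs, abs_of_nonneg]
          have : (0:ℝ) < s := hs
          positivity
        rw [hμ, setIntegral_congr_fun measurableSet_Ioi h2, integral_const_mul, L3 hω]
      rw [Real.norm_eq_abs, he, abs_of_nonneg (by positivity)]
  have hswap := integral_integral_swap (μ := μ) (ν := μ)
    (f := fun ω s => (1 - Real.cos ω) * (s * Real.exp (-(ω*s)))) hintp
  have hL : ∫ ω, (∫ s, (1 - Real.cos ω) * (s * Real.exp (-(ω*s))) ∂μ) ∂μ
      = ∫ ω in Ioi (0:ℝ), (1 - Real.cos ω) * (ω^2)⁻¹ := by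
    rw [hμ]
    refine setIntegral_congr_fun measurableSet_Ioi (fun ω hω => ?_)
    rw [integral_const_mul, L3 hω]
  have hR : ∫ s, (∫ ω, (1 - Real.cos ω) * (s * Real.exp (-(ω*s))) ∂μ) ∂μ
      = ∫ s in Ioi (0:ℝ), (1+s^2)⁻¹ := by
    rw [hμ]
    refine setIntegral_congr_fun measurableSet_Ioi (fun s hs => ?_)
    exact L4 hs
  rw [hL, hR] at hswap
  rw [hswap, integral_Ioi_inv_one_add_sq, Real.arctan_zero, sub_zero]

lemma L6 : ∫ ω : ℝ, (1 - Real.cos ω) * (ω^2)⁻¹ = π := by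
  have hsplit := intervalIntegral.integral_Iic_add_Ioi (b := (0:ℝ)) gint.integrableOn gint.integrableOn
  have hneg : ∫ ω in Iic (0:ℝ), (1 - Real.cos ω) * (ω^2)⁻¹
      = ∫ ω in Ioi (0:ℝ), (1 - Real.cos ω) * (ω^2)⁻¹ := by
    have := integral_comp_neg_Iic (0:ℝ) (fun ω => (1 - Real.cos ω) * (ω^2)⁻¹)
    rw [neg_zero] at this
    rw [← this]
    refine setIntegral_congr_fun measurableSet_Iic (fun ω _ => ?_)
    simp
  rw [hneg, L5] at hsplit
  rw [← hsplit]
  ring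

lemma L7 (a : ℝ) : ∫ ω : ℝ, (1 - Real.cos (a*ω)) * (ω^2)⁻¹ = π * |a| := by
  rcases eq_or_ne a 0 with rfl | ha
  · simp
  have key : ∀ ω : ℝ, (1 - Real.cos (a*ω)) * (ω^2)⁻¹
      = a^2 * ((1 - Real.cos (a*ω)) * ((a*ω)^2)⁻¹) := by
    intro ω
    rcases eq_or_ne ω 0 with rfl | hω
    · simp
    · field_simp
  simp_rw [key]
  rw [integral_const_mul,
    MeasureTheory.Measure.integral_comp_mul_left (fun t => (1 - Real.cos t) * (t^2)⁻¹) a, L6]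
  have ha' : (0:ℝ) < |a| := abs_pos.mpr ha
  rw [smul_eq_mul]
  calc a^2 * (|a⁻¹| * π) = |a|^2 * |a|⁻¹ * π := by rw [abs_inv, sq_abs]; ring
    _ = π * |a| := by
        rw [sq]
        field_simp

set_option maxHeartbeats 1000000 in
/-- For a continuous compactly supported `p : ℝ → ℝ` with `∫ p = 0`,
`∬ p(x)p(x')|x−x'| dx dx' = −∫ |p̂(ω)|² dω/(πω²)` where `p̂(ω) = ∫ p(x)e^{iωx} dx`;
in particular the left-hand side is nonpositive. -/
theorem stmt_18 (p : ℝ → ℝ) (hcont : Continuous p) (hsupp : HasCompactSupport p)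
    (hzero : (∫ x, p x) = 0) :
    ((∫ x, ∫ x', p x * p x' * |x - x'|) =
      - ∫ ω : ℝ, ‖
          (∫ x : ℝ, (p x : ℂ) * Complex.exp (Complex.I * (ω : ℂ) * (x : ℂ)))‖ ^ 2
        / (Real.pi * ω ^ 2)) ∧
    (∫ x, ∫ x', p x * p x' * |x - x'|) ≤ 0 := by
  have hpint : Integrable p := hcont.integrable_of_hasCompactSupport hsupp
  obtain ⟨r, hr⟩ := hsupp.isBounded.subset_closedBall 0
  set C : ℝ := (2*r)^2 with hC
  -- bound on (x-x')² on the support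
  have hbound : ∀ z : ℝ × ℝ, p z.1 * p z.2 ≠ 0 → (z.1 - z.2)^2 ≤ C := by
    rintro ⟨x, y⟩ hz
    have hx : p x ≠ 0 := fun h => hz (by simp [h])
    have hy : p y ≠ 0 := fun h => hz (by simp [h])
    have hx' : |x| ≤ r := by
      have := hr (subset_tsupport p hx)
      simpa [Metric.mem_closedBall, Real.dist_eq] using this
    have hy' : |y| ≤ r := by
      have := hr (subset_tsupport p hy)
      simpa [Metric.mem_closedBall, Real.dist_eq] using this
    have habs : |x - y| ≤ 2*r := by
      calc |x - y| ≤ |x| + |y| := abs_sub _ _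
        _ ≤ 2*r := by linarith
    calc (x-y)^2 = |x-y|^2 := (sq_abs _).symm
      _ ≤ (2*r)^2 := pow_le_pow_left₀ (abs_nonneg _) habs 2
  -- Fourier real/imag parts
  set F : ℝ → ℝ := fun ω => ∫ x, p x * Real.cos (x*ω) with hFdef
  set G : ℝ → ℝ := fun ω => ∫ x, p x * Real.sin (x*ω) with hGdef
  have hcosint : ∀ ω : ℝ, Integrable (fun x => p x * Real.cos (x*ω)) := by
    intro ω
    exact (hcont.mul (by fun_prop)).integrable_of_hasCompactSupport (hsupp.mul_right)
  have hsinint : ∀ ω : ℝ, Integrable (fun x => p x * Real.sin (x*ω)) := by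
    intro ω
    exact (hcont.mul (by fun_prop)).integrable_of_hasCompactSupport (hsupp.mul_right)
  set q : ℝ × ℝ → ℝ := fun z => p z.1 * p z.2 with hqdef
  have hqint : Integrable q (volume.prod volume) := hpint.mul_prod hpint
  -- the kernel function
  set Φ : ℝ × ℝ → ℝ → ℝ :=
    fun z ω => q z * ((1 - Real.cos ((z.1 - z.2)*ω)) * (ω^2)⁻¹) with hΦdef
  -- integrability of the kernel on the triple product
  have hΦmeas : AEStronglyMeasurable (Function.uncurry Φ)
      (((volume.prod volume : Measure (ℝ×ℝ))).prod volume) := by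
    apply Measurable.aestronglyMeasurable
    apply Measurable.mul
    · exact ((hcont.measurable.comp (measurable_fst.comp measurable_fst)).mul
        (hcont.measurable.comp (measurable_snd.comp measurable_fst)))
    · apply Measurable.mul
      · apply Measurable.sub measurable_const
        exact (Real.measurable_cos.comp
          (((measurable_fst.comp measurable_fst).sub
            (measurable_snd.comp measurable_fst)).mul measurable_snd))
      · exact (measurable_snd.pow_const 2).inv
  have hΦint : Integrable (Function.uncurry Φ)
      (((volume.prod volume : Measure (ℝ×ℝ))).prod volume) := by
    have hD : Integrable (fun w : (ℝ×ℝ) × ℝ =>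
        (|p w.1.1| * |p w.1.2|) * ((C+4) * (1+w.2^2)⁻¹))
        (((volume.prod volume : Measure (ℝ×ℝ))).prod volume) :=
      (hpint.abs.mul_prod hpint.abs).mul_prod (integrable_inv_one_add_sq.const_mul (C+4))
    refine hD.mono' hΦmeas ?_
    filter_upwards with w
    have hC4 : (0:ℝ) ≤ C + 4 := by rw [hC]; positivity
    rcases eq_or_ne (q w.1) 0 with hq0 | hq0
    · have h0 : Function.uncurry Φ w = 0 := by
        show Φ w.1 w.2 = 0
        simp only [hΦdef]
        rw [hq0, zero_mul]
      rw [h0, norm_zero]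
      exact mul_nonneg (mul_nonneg (abs_nonneg _) (abs_nonneg _))
        (mul_nonneg hC4 (by positivity))
    · have h1 : ‖Function.uncurry Φ w‖
          = |q w.1| * ((1 - Real.cos ((w.1.1 - w.1.2)*w.2)) * (w.2^2)⁻¹) := by
        show ‖Φ w.1 w.2‖ = _
        simp only [hΦdef]
        rw [Real.norm_eq_abs, abs_mul]
        congr 1
        exact abs_of_nonneg (mul_nonneg (by nlinarith [Real.cos_le_one ((w.1.1 - w.1.2)*w.2)])
          (by positivity))
      rw [h1]
      have h2 := kb (hbound w.1 hq0) w.2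
      calc |q w.1| * ((1 - Real.cos ((w.1.1 - w.1.2)*w.2)) * (w.2^2)⁻¹)
          ≤ |q w.1| * ((C+4) * (1+w.2^2)⁻¹) :=
            mul_le_mul_of_nonneg_left h2 (abs_nonneg _)
        _ = (|p w.1.1| * |p w.1.2|) * ((C+4) * (1+w.2^2)⁻¹) := by
            rw [hqdef]; rw [abs_mul]
  -- swap
  have hswap := integral_integral_swap (μ := ((volume.prod volume : Measure (ℝ×ℝ)))) (ν := volume)
    (f := Φ) hΦint
  -- left side of swap
  have hTint : Integrable (fun z : ℝ×ℝ => q z * |z.1 - z.2|) (volume.prod volume) := by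
    apply Continuous.integrable_of_hasCompactSupport
    · fun_prop
    · apply HasCompactSupport.intro (hsupp.prod hsupp)
      rintro ⟨x, y⟩ hz
      rw [Set.mem_prod] at hz
      push_neg at hz
      rcases Classical.em (x ∈ tsupport p) with hx | hx
      · have := image_eq_zero_of_notMem_tsupport (hz hx)
        simp [hqdef, this]
      · have := image_eq_zero_of_notMem_tsupport hx
        simp [hqdef, this]
  have hL : ∫ z : ℝ×ℝ, (∫ ω, Φ z ω) ∂(volume.prod volume)
      = π * ∫ z : ℝ×ℝ, q z * |z.1 - z.2| ∂(volume.prod volume) := by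
    rw [← integral_const_mul]
    refine integral_congr_ae (Eventually.of_forall (fun z => ?_))
    rw [hΦdef]
    simp only
    rw [integral_const_mul, L7 (z.1 - z.2)]
    ring
  -- right side of swap
  have hR : ∀ ω : ℝ, (∫ z : ℝ×ℝ, Φ z ω ∂(volume.prod volume))
      = -((F ω^2 + G ω^2) * (ω^2)⁻¹) := by
    intro ω
    have e1 : ∀ z : ℝ×ℝ, Φ z ω = (q z - (p z.1 * Real.cos (z.1*ω) * (p z.2 * Real.cos (z.2*ω))
        + p z.1 * Real.sin (z.1*ω) * (p z.2 * Real.sin (z.2*ω)))) * (ω^2)⁻¹ := by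
      intro z
      have hcs : Real.cos ((z.1 - z.2)*ω)
          = Real.cos (z.1*ω) * Real.cos (z.2*ω) + Real.sin (z.1*ω) * Real.sin (z.2*ω) := by
        rw [sub_mul, Real.cos_sub]
      simp only [hΦdef, hqdef]
      rw [hcs]
      ring
    rw [integral_congr_ae (Eventually.of_forall e1), integral_mul_const]
    simp only [hqdef]
    have hint1 : Integrable (fun z : ℝ×ℝ => p z.1 * Real.cos (z.1*ω) * (p z.2 * Real.cos (z.2*ω)))
        (volume.prod volume) := (hcosint ω).mul_prod (hcosint ω)
    have hint2 : Integrable (fun z : ℝ×ℝ => p z.1 * Real.sin (z.1*ω) * (p z.2 * Real.sin (z.2*ω)))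
        (volume.prod volume) := (hsinint ω).mul_prod (hsinint ω)
    have hqint' : Integrable (fun z : ℝ×ℝ => p z.1 * p z.2) (volume.prod volume) := hqint
    have hs2 : ∫ z : ℝ×ℝ, (p z.1 * p z.2 - (p z.1 * Real.cos (z.1*ω) * (p z.2 * Real.cos (z.2*ω))
          + p z.1 * Real.sin (z.1*ω) * (p z.2 * Real.sin (z.2*ω)))) ∂(volume.prod volume)
        = (∫ z : ℝ×ℝ, p z.1 * p z.2 ∂(volume.prod volume))
          - ((∫ z : ℝ×ℝ, p z.1 * Real.cos (z.1*ω) * (p z.2 * Real.cos (z.2*ω)) ∂(volume.prod volume))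
            + (∫ z : ℝ×ℝ, p z.1 * Real.sin (z.1*ω) * (p z.2 * Real.sin (z.2*ω)) ∂(volume.prod volume))) := by
      rw [← integral_add hint1 hint2]
      exact integral_sub hqint' (hint1.add hint2)
    have hqz : (∫ z : ℝ×ℝ, p z.1 * p z.2 ∂(volume.prod volume)) = 0 := by
      have : (∫ z : ℝ×ℝ, p z.1 * p z.2 ∂(volume.prod volume))
          = (∫ x, p x) * (∫ x, p x) := integral_prod_mul _ _
      rw [this, hzero, mul_zero]
    have hcc : (∫ z : ℝ×ℝ, p z.1 * Real.cos (z.1*ω) * (p z.2 * Real.cos (z.2*ω)) ∂(volume.prod volume))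
        = (∫ x, p x * Real.cos (x*ω)) * (∫ x, p x * Real.cos (x*ω)) :=
      integral_prod_mul (fun x => p x * Real.cos (x*ω)) (fun x => p x * Real.cos (x*ω))
    have hss : (∫ z : ℝ×ℝ, p z.1 * Real.sin (z.1*ω) * (p z.2 * Real.sin (z.2*ω)) ∂(volume.prod volume))
        = (∫ x, p x * Real.sin (x*ω)) * (∫ x, p x * Real.sin (x*ω)) :=
      integral_prod_mul (fun x => p x * Real.sin (x*ω)) (fun x => p x * Real.sin (x*ω))
    rw [hs2, hqz, hcc, hss]
    rw [hFdef, hGdef]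
    simp only
    ring
  have hRint : ∫ ω : ℝ, (∫ z : ℝ×ℝ, Φ z ω ∂(volume.prod volume))
      = -∫ ω : ℝ, (F ω^2 + G ω^2) * (ω^2)⁻¹ := by
    have h1 : (∫ ω : ℝ, (∫ z : ℝ×ℝ, Φ z ω ∂(volume.prod volume)))
        = ∫ ω : ℝ, -((F ω^2 + G ω^2) * (ω^2)⁻¹) :=
      integral_congr_ae (Eventually.of_forall hR)
    rw [h1, integral_neg]
  rw [hL, hRint] at hswap
  -- identification of T with the double integral
  have hT : (∫ x, ∫ x', p x * p x' * |x - x'|)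
      = ∫ z : ℝ×ℝ, q z * |z.1 - z.2| ∂(volume.prod volume) := by
    rw [integral_prod _ hTint]
  -- A ≥ 0
  set A : ℝ := ∫ ω : ℝ, (F ω^2 + G ω^2) * (ω^2)⁻¹ with hA
  have hAnn : 0 ≤ A := integral_nonneg (fun ω => by positivity)
  have hmain : (∫ x, ∫ x', p x * p x' * |x - x'|) = -(π⁻¹ * A) := by
    rw [hT]
    have hπ : (π:ℝ) ≠ 0 := Real.pi_ne_zero
    field_simp
    linarith [hswap]
  -- complex abs identification
  have hcab : ∀ ω : ℝ, ‖
      (∫ x : ℝ, (p x : ℂ) * Complex.exp (Complex.I * (ω : ℂ) * (x : ℂ)))‖ ^ 2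
      = F ω^2 + G ω^2 := by
    intro ω
    have e2 : ∀ x : ℝ, (p x : ℂ) * Complex.exp (Complex.I * (ω : ℂ) * (x : ℂ))
        = ((p x * Real.cos (x*ω) : ℝ) : ℂ) + ((p x * Real.sin (x*ω) : ℝ) : ℂ) * Complex.I := by
      intro x
      have : Complex.I * (ω : ℂ) * (x : ℂ) = ((x*ω : ℝ) : ℂ) * Complex.I := by
        push_cast
        ring
      rw [this, Complex.exp_mul_I, ← Complex.ofReal_cos, ← Complex.ofReal_sin]
      push_cast
      ring
    rw [integral_congr_ae (Eventually.of_forall e2)]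
    have hadd : ∫ x : ℝ, (((p x * Real.cos (x*ω) : ℝ) : ℂ) + ((p x * Real.sin (x*ω) : ℝ) : ℂ) * Complex.I)
        = (∫ x : ℝ, ((p x * Real.cos (x*ω) : ℝ) : ℂ))
          + ∫ x : ℝ, (((p x * Real.sin (x*ω) : ℝ) : ℂ) * Complex.I) :=
      integral_add ((hcosint ω).ofReal) (((hsinint ω).ofReal).mul_const Complex.I)
    have hmulI : (∫ x : ℝ, (((p x * Real.sin (x*ω) : ℝ) : ℂ) * Complex.I))
        = (∫ x : ℝ, ((p x * Real.sin (x*ω) : ℝ) : ℂ)) * Complex.I := integral_mul_const _ _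
    have hor1 : (∫ x : ℝ, ((p x * Real.cos (x*ω) : ℝ) : ℂ)) = ((∫ x, p x * Real.cos (x*ω) : ℝ) : ℂ) :=
      integral_ofReal
    have hor2 : (∫ x : ℝ, ((p x * Real.sin (x*ω) : ℝ) : ℂ)) = ((∫ x, p x * Real.sin (x*ω) : ℝ) : ℂ) :=
      integral_ofReal
    rw [hadd, hmulI, hor1, hor2]
    rw [Complex.sq_norm, Complex.normSq_add_mul_I]
  -- final
  have hRHS : -∫ ω : ℝ, ‖
      (∫ x : ℝ, (p x : ℂ) * Complex.exp (Complex.I * (ω : ℂ) * (x : ℂ)))‖ ^ 2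
      / (Real.pi * ω ^ 2) = -(π⁻¹ * A) := by
    congr 1
    have hpt : ∀ ω : ℝ, ‖
        (∫ x : ℝ, (p x : ℂ) * Complex.exp (Complex.I * (ω : ℂ) * (x : ℂ)))‖ ^ 2
        / (Real.pi * ω ^ 2) = π⁻¹ * ((F ω^2 + G ω^2) * (ω^2)⁻¹) := by
      intro ω
      rw [hcab ω, div_eq_mul_inv, mul_inv]
      ring
    rw [integral_congr_ae (Eventually.of_forall hpt), integral_const_mul, ← hA]
  refine ⟨?_, ?_⟩
  · rw [hmain, hRHS]
  · rw [hmain]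
    have : 0 ≤ π⁻¹ * A := mul_nonneg (by positivity) hAnn
    linarith
end

section
/- Let J : C → ℝ be differentiable on a convex closed set C ⊆ ℝ^p with L-Lipschitz gradient, and consider projected gradient descent β^{(k+1)} = Π_C(β^{(k)} − α ∇J(β^{(k)})) with step size 0 < α ≤ 1/L. Then the sequence J(β^{(k)}) is nonincreasing, and every accumulation point β^∞ of the iterates is a stationary point, i.e., ⟨∇J(β^∞), β' − β^∞⟩ ≥ 0 for all β' ∈ C. -/
open Filter Topology

/-- Descent lemma: L-Lipschitz gradient on a convex set gives a quadratic upper bound. -/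
lemma aux_descent {F : Type*} [NormedAddCommGroup F] [InnerProductSpace ℝ F] [CompleteSpace F]
    (C : Set F) (hC : Convex ℝ C) (J : F → ℝ) (G : F → F)
    (hgrad : ∀ x ∈ C, HasGradientAt J (G x) x) (L : ℝ) (hL : 0 ≤ L)
    (hLip : ∀ x ∈ C, ∀ y ∈ C, ‖G x - G y‖ ≤ L * ‖x - y‖)
    {x y : F} (hx : x ∈ C) (hy : y ∈ C) :
    J y ≤ J x + (inner ℝ (G x) (y - x) : ℝ) + L / 2 * ‖y - x‖ ^ 2 := by
  set d := y - x with hd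
  set c : ℝ → F := fun t => x + t • d with hc
  have hcd : ∀ t : ℝ, HasDerivAt c d t := by
    intro t
    have h := ((hasDerivAt_id' t).smul_const d).const_add x
    rw [one_smul] at h
    exact h
  have hmemC : ∀ t ∈ Set.Icc (0:ℝ) 1, c t ∈ C := fun t ht =>
    hC.add_smul_sub_mem hx hy ht
  have hJc : ∀ t ∈ Set.Icc (0:ℝ) 1,
      HasDerivAt (fun s => J (c s)) (inner ℝ (G (c t)) d : ℝ) t := by
    intro t ht
    have h1 := ((hgrad (c t) (hmemC t ht)).hasFDerivAt).comp_hasDerivAt t (hcd t)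
    simp [InnerProductSpace.toDual_apply_apply] at h1
    exact h1
  set h : ℝ → ℝ := fun t => J (c t) - t * (inner ℝ (G x) d : ℝ) - L / 2 * t ^ 2 * ‖d‖ ^ 2
    with hh_def
  have hh : ∀ t ∈ Set.Icc (0:ℝ) 1, HasDerivAt h
      ((inner ℝ (G (c t)) d : ℝ) - (inner ℝ (G x) d : ℝ) - L / 2 * (2 * t ^ 1) * ‖d‖ ^ 2) t := by
    intro t ht
    exact ((hJc t ht).sub (hasDerivAt_mul_const _)).sub
      (((hasDerivAt_pow 2 t).const_mul (L / 2)).mul_const (‖d‖ ^ 2))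
  have hanti : AntitoneOn h (Set.Icc (0:ℝ) 1) := by
    apply antitoneOn_of_deriv_nonpos (convex_Icc 0 1)
    · exact fun t ht => (hh t ht).continuousAt.continuousWithinAt
    · intro t ht
      rw [interior_Icc] at ht
      exact ((hh t (Set.Ioo_subset_Icc_self ht)).differentiableAt).differentiableWithinAt
    · intro t ht
      rw [interior_Icc] at ht
      rw [(hh t (Set.Ioo_subset_Icc_self ht)).deriv]
      have hlip2 : ‖G (c t) - G x‖ ≤ L * ‖c t - x‖ :=
        hLip (c t) (hmemC t (Set.Ioo_subset_Icc_self ht)) x hx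
      have hct : ‖c t - x‖ = t * ‖d‖ := by
        simp [hc, norm_smul, abs_of_pos ht.1]
      have hdn : (0:ℝ) ≤ ‖d‖ := norm_nonneg _
      have h1 : (inner ℝ (G (c t)) d : ℝ) - (inner ℝ (G x) d : ℝ) ≤ L * (t * ‖d‖) * ‖d‖ := by
        rw [← inner_sub_left]
        calc (inner ℝ (G (c t) - G x) d : ℝ) ≤ ‖G (c t) - G x‖ * ‖d‖ := real_inner_le_norm _ _
          _ ≤ L * ‖c t - x‖ * ‖d‖ := mul_le_mul_of_nonneg_right hlip2 hdn
          _ = L * (t * ‖d‖) * ‖d‖ := by rw [hct]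
      nlinarith [h1]
  have h10 : h 1 ≤ h 0 := hanti (by norm_num) (by norm_num) (by norm_num)
  have hc0 : c 0 = x := by simp [hc]
  have hc1 : c 1 = y := by simp [hc, hd]
  simp only [hh_def, hc0, hc1] at h10
  nlinarith [h10]

/-- Projected gradient descent on a closed convex set `C` with step size `α ≤ 1/L`, where the
gradient `G` of `J` is `L`-Lipschitz on `C`: the objective values are nonincreasing, and
every accumulation point `β∞` of the iterates is stationary, i.e.
`⟨G(β∞), β' − β∞⟩ ≥ 0` for all `β' ∈ C`. -/
theorem stmt_19 {n : ℕ} (C : Set (EuclideanSpace ℝ (Fin n)))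
    (hCconv : Convex ℝ C) (hCclosed : IsClosed C) (hCne : C.Nonempty)
    (J : EuclideanSpace ℝ (Fin n) → ℝ)
    (G : EuclideanSpace ℝ (Fin n) → EuclideanSpace ℝ (Fin n))
    (hgrad : ∀ x ∈ C, HasGradientAt J (G x) x)
    (L : ℝ) (hL : 0 < L)
    (hLip : ∀ x ∈ C, ∀ y ∈ C, ‖G x - G y‖ ≤ L * ‖x - y‖)
    (proj : EuclideanSpace ℝ (Fin n) → EuclideanSpace ℝ (Fin n))
    (hprojmem : ∀ x, proj x ∈ C)
    (hprojmin : ∀ x, ∀ y ∈ C, ‖x - proj x‖ ≤ ‖x - y‖)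
    (α : ℝ) (hα : 0 < α) (hα' : α ≤ 1 / L)
    (β : ℕ → EuclideanSpace ℝ (Fin n)) (hβ0 : β 0 ∈ C)
    (hiter : ∀ k, β (k + 1) = proj (β k - α • G (β k))) :
    (∀ k, J (β (k + 1)) ≤ J (β k)) ∧
    (∀ βinf, MapClusterPt βinf atTop β →
      ∀ β' ∈ C, 0 ≤ (inner ℝ (G βinf) (β' - βinf) : ℝ)) := by
  -- variational inequality for the projection
  have hVI : ∀ x, ∀ y ∈ C, (inner ℝ (x - proj x) (y - proj x) : ℝ) ≤ 0 := by
    intro x y hy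
    haveI : Nonempty ↑C := ⟨⟨proj x, hprojmem x⟩⟩
    have heq : ‖x - proj x‖ = ⨅ w : C, ‖x - (w : EuclideanSpace ℝ (Fin n))‖ := by
      apply le_antisymm
      · exact le_ciInf fun w => hprojmin x w w.2
      · refine ciInf_le ⟨0, ?_⟩ (⟨proj x, hprojmem x⟩ : C)
        rintro _ ⟨w, rfl⟩
        exact norm_nonneg _
    exact (norm_eq_iInf_iff_real_inner_le_zero hCconv (hprojmem x)).1 heq y hy
  have hmem : ∀ k, β k ∈ C := by
    intro k; induction k with
    | zero => exact hβ0
    | succ k _ => rw [hiter k]; exact hprojmem _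
  have hLα : L ≤ 1 / α := by
    rw [le_div_iff₀ hα]
    calc L * α ≤ L * (1 / L) := by nlinarith
    _ = 1 := by field_simp
  -- key descent estimate
  have hkey : ∀ k, J (β (k + 1)) + 1 / (2 * α) * ‖β (k + 1) - β k‖ ^ 2 ≤ J (β k) := by
    intro k
    set p := β (k + 1) with hp
    have hVIk : (inner ℝ ((β k - α • G (β k)) - p) (β k - p) : ℝ) ≤ 0 := by
      rw [hp, hiter k]
      exact hVI _ (β k) (hmem k)
    have hexp : (β k - α • G (β k)) - p = (β k - p) - α • G (β k) := by abel
    rw [hexp, inner_sub_left, real_inner_smul_left, real_inner_self_eq_norm_sq,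
      sub_nonpos] at hVIk
    have hA : ‖p - β k‖ ^ 2 ≤ α * (-(inner ℝ (G (β k)) (p - β k) : ℝ)) := by
      calc ‖p - β k‖ ^ 2 = ‖β k - p‖ ^ 2 := by rw [norm_sub_rev]
        _ ≤ α * (inner ℝ (G (β k)) (β k - p) : ℝ) := hVIk
        _ = α * (-(inner ℝ (G (β k)) (p - β k) : ℝ)) := by
            rw [show β k - p = -(p - β k) from by abel, inner_neg_right]
    have hI : (inner ℝ (G (β k)) (p - β k) : ℝ) ≤ -‖p - β k‖ ^ 2 / α := by
      rw [le_div_iff₀ hα]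
      nlinarith [hA]
    have hid2 : -‖p - β k‖ ^ 2 / α
        = -(1 / (2 * α)) * ‖p - β k‖ ^ 2 - 1 / (2 * α) * ‖p - β k‖ ^ 2 := by
      field_simp
      ring
    have hs : (0:ℝ) ≤ ‖p - β k‖ ^ 2 := sq_nonneg _
    have hhalf : L / 2 * ‖p - β k‖ ^ 2 ≤ 1 / (2 * α) * ‖p - β k‖ ^ 2 := by
      apply mul_le_mul_of_nonneg_right _ hs
      rw [div_le_div_iff₀ two_pos (by positivity)]
      have h1 : L * α ≤ L * (1 / L) := mul_le_mul_of_nonneg_left hα' hL.le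
      have h2 : L * (1 / L) = 1 := by field_simp
      nlinarith [h1, h2]
    have hdesc := aux_descent C hCconv J G hgrad L hL.le hLip (hmem k) (hmem (k + 1))
    rw [← hp] at hdesc
    linarith [hdesc, hI, hid2, hhalf]
  have hstep : ∀ k, J (β (k + 1)) ≤ J (β k) := by
    intro k
    have := hkey k
    have hnn : (0:ℝ) ≤ 1 / (2 * α) * ‖β (k + 1) - β k‖ ^ 2 := by positivity
    linarith
  refine ⟨hstep, ?_⟩
  intro βinf hcl β' hβ'
  obtain ⟨ψ, hψmono, hψtend⟩ := TopologicalSpace.FirstCountableTopology.tendsto_subseq hcl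
  have hβinfC : βinf ∈ C :=
    hCclosed.mem_of_tendsto hψtend (Eventually.of_forall fun j => hmem (ψ j))
  -- J(β k) converges to J(βinf)
  have hJanti : Antitone fun k => J (β k) := antitone_nat_of_succ_le hstep
  have hJcont : ContinuousAt J βinf := (hgrad βinf hβinfC).differentiableAt.continuousAt
  have hJsub : Tendsto (fun j => J (β (ψ j))) atTop (𝓝 (J βinf)) := hJcont.tendsto.comp hψtend
  have hlb : ∀ k, J βinf ≤ J (β k) := by
    intro k
    apply le_of_tendsto hJsub
    filter_upwards [eventually_ge_atTop k] with j hj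
    exact hJanti (hj.trans (hψmono.le_apply))
  have hJfull : Tendsto (fun k => J (β k)) atTop (𝓝 (J βinf)) := by
    have h1 : Tendsto (fun k => J (β k)) atTop (𝓝 (⨅ k, J (β k))) :=
      tendsto_atTop_ciInf hJanti ⟨J βinf, by rintro _ ⟨k, rfl⟩; exact hlb k⟩
    have h2 : Tendsto (fun j => J (β (ψ j))) atTop (𝓝 (⨅ k, J (β k))) :=
      h1.comp hψmono.tendsto_atTop
    rwa [tendsto_nhds_unique h2 hJsub] at h1
  have hdiff : Tendsto (fun k => J (β k) - J (β (k + 1))) atTop (𝓝 0) := by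
    have h := hJfull.sub (hJfull.comp (tendsto_add_atTop_nat 1))
    simpa using h
  have hsq : Tendsto (fun k => ‖β (k + 1) - β k‖ ^ 2) atTop (𝓝 0) := by
    have hb : Tendsto (fun k => 2 * α * (J (β k) - J (β (k + 1)))) atTop (𝓝 0) := by
      simpa using hdiff.const_mul (2 * α)
    apply squeeze_zero (fun k => sq_nonneg _) _ hb
    intro k
    have hk := hkey k
    have h2α : (0:ℝ) < 2 * α := by positivity
    have : 1 / (2 * α) * ‖β (k + 1) - β k‖ ^ 2 ≤ J (β k) - J (β (k + 1)) := by linarith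
    calc ‖β (k + 1) - β k‖ ^ 2 = 2 * α * (1 / (2 * α) * ‖β (k + 1) - β k‖ ^ 2) := by
          field_simp
      _ ≤ 2 * α * (J (β k) - J (β (k + 1))) := by nlinarith
  have hdtend : Tendsto (fun k => ‖β (k + 1) - β k‖) atTop (𝓝 0) := by
    have h := hsq.sqrt
    simpa [Real.sqrt_sq (norm_nonneg _)] using h
  have hβψ1 : Tendsto (fun j => β (ψ j + 1)) atTop (𝓝 βinf) := by
    have h0 : Tendsto (fun j => β (ψ j + 1) - β (ψ j)) atTop (𝓝 0) := by
      apply tendsto_zero_iff_norm_tendsto_zero.2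
      have := hdtend.comp hψmono.tendsto_atTop
      exact this
    have := h0.add hψtend
    simpa using this
  have hGtend : Tendsto (fun j => G (β (ψ j))) atTop (𝓝 (G βinf)) := by
    have h0 : Tendsto (fun j => G (β (ψ j)) - G βinf) atTop (𝓝 0) := by
      apply squeeze_zero_norm (fun j => hLip _ (hmem _) _ hβinfC)
      have h1 : Tendsto (fun j => ‖β (ψ j) - βinf‖) atTop (𝓝 0) :=
        tendsto_iff_norm_sub_tendsto_zero.1 hψtend
      simpa using h1.const_mul L
    have := h0.add_const (G βinf)
    simpa using this
  have hineq : ∀ j, (inner ℝ (β (ψ j) - β (ψ j + 1)) (β' - β (ψ j + 1)) : ℝ)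
      ≤ α * (inner ℝ (G (β (ψ j))) (β' - β (ψ j + 1)) : ℝ) := by
    intro j
    have h' : (inner ℝ ((β (ψ j) - α • G (β (ψ j))) - β (ψ j + 1)) (β' - β (ψ j + 1)) : ℝ)
        ≤ 0 := by
      rw [hiter (ψ j)]; exact hVI _ β' hβ'
    have hexp : (β (ψ j) - α • G (β (ψ j))) - β (ψ j + 1)
        = (β (ψ j) - β (ψ j + 1)) - α • G (β (ψ j)) := by abel
    rw [hexp, inner_sub_left, real_inner_smul_left] at h'
    linarith
  have hLHS : Tendsto (fun j => (inner ℝ (β (ψ j) - β (ψ j + 1)) (β' - β (ψ j + 1)) : ℝ))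
      atTop (𝓝 (inner ℝ (βinf - βinf) (β' - βinf) : ℝ)) :=
    Tendsto.inner (hψtend.sub hβψ1) (tendsto_const_nhds.sub hβψ1)
  have hRHS : Tendsto (fun j => α * (inner ℝ (G (β (ψ j))) (β' - β (ψ j + 1)) : ℝ))
      atTop (𝓝 (α * (inner ℝ (G βinf) (β' - βinf) : ℝ))) :=
    (Tendsto.inner hGtend (tendsto_const_nhds.sub hβψ1)).const_mul α
  have hfin : (inner ℝ (βinf - βinf) (β' - βinf) : ℝ)
      ≤ α * (inner ℝ (G βinf) (β' - βinf) : ℝ) :=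
    le_of_tendsto_of_tendsto' hLHS hRHS hineq
  rw [sub_self, inner_zero_left] at hfin
  nlinarith [hfin]
end
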